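/- Let p be a prime and G a finite group admitting an automorphism α whose order is coprime to |G|, with G = [G,α]. Let M be an α-invariant normal p-subgroup of G and suppose that |I_M(α)| = p^m for a nonnegative integer m, where I_M(α) = {x⁻¹·α(x) : x ∈ M}. Then M is contained in the (2m+1)-st term Z_{2m+1}(O_p(G)) of the upper central series of O_p(G), where O_p(G) is the largest normal p-subgroup of G (the join of all normal p-subgroups of G). -/

import Mathlib

open Subgroup
section CommList
variable {G : Type*} [Group G] {H : Type*} [Group H]

/-- iterated commutator along a list -/
def commList (x : G) (l : List G) : G :=
  l.foldl (fun a b => a * b * a⁻¹ * b⁻¹) x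

@[simp] lemma commList_nil (x : G) : commList x [] = x := rfl

lemma commList_cons (x y : G) (l : List G) :
    commList x (y :: l) = commList (x * y * x⁻¹ * y⁻¹) l := rfl

lemma commList_append (x : G) (l₁ l₂ : List G) :
    commList x (l₁ ++ l₂) = commList (commList x l₁) l₂ :=
  List.foldl_append

lemma map_commList (f : G →* H) (x : G) (l : List G) :
    f (commList x l) = commList (f x) (l.map f) := by
  induction l generalizing x with
  | nil => simp
  | cons y l ih => simp [commList_cons, ih, map_mul, map_inv]

lemma commList_mem (K : Subgroup G) {x : G} (hx : x ∈ K) {l : List G}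
    (hl : ∀ y ∈ l, y ∈ K) : commList x l ∈ K := by
  induction l generalizing x with
  | nil => simpa
  | cons y l ih =>
    rw [commList_cons]
    exact ih (K.mul_mem (K.mul_mem (K.mul_mem hx (hl y (by simp))) (K.inv_mem hx))
      (K.inv_mem (hl y (by simp)))) (fun z hz => hl z (by simp [hz]))

lemma mem_upperCentralSeries_iff_commList (n : ℕ) (x : G) :
    x ∈ Subgroup.upperCentralSeries G n ↔ ∀ l : List G, l.length = n → commList x l = 1 := by
  induction n generalizing x with
  | zero =>
    simp only [Subgroup.upperCentralSeries_zero, Subgroup.mem_bot]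
    constructor
    · rintro rfl l hl
      rw [List.length_eq_zero_iff] at hl; subst hl; rfl
    · intro h; simpa using h [] rfl
  | succ n ih =>
    rw [Subgroup.mem_upperCentralSeries_succ_iff]
    constructor
    · intro h l hl
      cases l with
      | nil => simp at hl
      | cons y l' =>
        rw [commList_cons]
        exact (ih _).mp (h y) l' (by simpa using hl)
    · intro h y
      rw [ih]
      intro l hl
      rw [commutatorElement_def, ← commList_cons]
      exact h (y :: l) (by simp [hl])

lemma mem_map_subtype_ucs_iff (K : Subgroup G) (n : ℕ) (x : G) :
    x ∈ Subgroup.map K.subtype (Subgroup.upperCentralSeries K n) ↔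
      x ∈ K ∧ ∀ l : List G, l.length = n → (∀ y ∈ l, y ∈ K) → commList x l = 1 := by
  constructor
  · rintro ⟨x', hx', rfl⟩
    refine ⟨x'.2, ?_⟩
    intro l hlen hlK
    let l' : List K := l.attach.map (fun y => (⟨y.1, hlK y.1 y.2⟩ : K))
    have hmap : l'.map K.subtype = l := by
      simp only [l', List.map_map]
      exact (List.attach_map_val (l := l)).trans (List.map_id l)
    have hlen' : l'.length = n := by
      simp only [l', List.length_map, List.length_attach, hlen]
    have := (mem_upperCentralSeries_iff_commList n x').mp hx' l' hlen'
    calc commList (K.subtype x') l = commList (K.subtype x') (l'.map K.subtype) := by rw [hmap]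
      _ = K.subtype (commList x' l') := (map_commList K.subtype x' l').symm
      _ = 1 := by rw [this]; rfl
  · rintro ⟨hxK, h⟩
    refine ⟨⟨x, hxK⟩, ?_, rfl⟩
    rw [SetLike.mem_coe, mem_upperCentralSeries_iff_commList]
    intro l hl
    apply Subtype.ext
    have h2 := map_commList K.subtype (⟨x, hxK⟩ : K) l
    show K.subtype _ = _
    rw [h2]
    rw [show K.subtype ⟨x, hxK⟩ = x from rfl]
    rw [h (l.map K.subtype) (by simp [hl]) (by rintro y hy; obtain ⟨z, hz, rfl⟩ := List.mem_map.mp hy; exact z.2)]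
    rfl
end CommList


section Part2
variable {G : Type*} [Group G]

/-- fixed-point subgroup of an automorphism -/
def fixSub (α : MulAut G) : Subgroup G where
  carrier := {g | α g = g}
  one_mem' := map_one α
  mul_mem' := by
    intro a b ha hb
    simp only [Set.mem_setOf_eq, map_mul] at *
    rw [ha, hb]
  inv_mem' := by
    intro a ha
    simp only [Set.mem_setOf_eq, map_inv] at *
    rw [ha]

@[simp] lemma mem_fixSub {α : MulAut G} {x : G} : x ∈ fixSub α ↔ α x = x := Iff.rfl

lemma map_eq_self_of_mem (f : G ≃* G) (K : Subgroup G) (h1 : ∀ x ∈ K, f x ∈ K)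
    (h2 : ∀ x ∈ K, f.symm x ∈ K) : Subgroup.map f.toMonoidHom K = K := by
  apply le_antisymm
  · rintro _ ⟨x, hx, rfl⟩
    exact h1 x hx
  · intro x hx
    exact ⟨f.symm x, h2 x hx, f.apply_symm_apply x⟩

lemma mem_of_map_eq {f : G ≃* G} {K : Subgroup G} (h : Subgroup.map f.toMonoidHom K = K) :
    (∀ x ∈ K, f x ∈ K) ∧ (∀ x ∈ K, f.symm x ∈ K) := by
  constructor
  · intro x hx
    rw [← h]
    exact mem_map_of_mem _ hx
  · intro x hx
    rw [← h] at hx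
    obtain ⟨y, hy, rfl⟩ := hx
    simpa using hy

/-- invariance of `map K.subtype (Subgroup.upperCentralSeries K n)` under a `MulEquiv` preserving `K` -/
lemma ucs_mem_of_equiv {K : Subgroup G} (f : G ≃* G) (h1 : ∀ y ∈ K, f y ∈ K)
    (h2 : ∀ y ∈ K, f.symm y ∈ K) (n : ℕ) {x : G}
    (hx : x ∈ Subgroup.map K.subtype (Subgroup.upperCentralSeries K n)) :
    f x ∈ Subgroup.map K.subtype (Subgroup.upperCentralSeries K n) := by
  rw [mem_map_subtype_ucs_iff] at hx ⊢
  refine ⟨h1 x hx.1, ?_⟩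
  intro l hlen hlK
  have hml : (l.map (f.symm : G → G)).map (f : G → G) = l := by
    rw [List.map_map]
    simpa using List.map_id l
  have key := map_commList f.toMonoidHom x (l.map (f.symm : G → G))
  simp only [MulEquiv.coe_toMonoidHom] at key
  rw [hml] at key
  rw [← key, hx.2 (l.map f.symm) (by simp [hlen])
    (by rintro y hy; obtain ⟨z, hz, rfl⟩ := List.mem_map.mp hy; exact h2 z (hlK z hz)), map_one]

lemma ucs_map_normal (K : Subgroup G) [hK : K.Normal] (n : ℕ) :
    (Subgroup.map K.subtype (Subgroup.upperCentralSeries K n)).Normal := by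
  constructor
  intro x hx g
  have h1 : ∀ y ∈ K, (MulAut.conj g) y ∈ K := fun y hy => hK.conj_mem y hy g
  have h2 : ∀ y ∈ K, (MulAut.conj g).symm y ∈ K := by
    intro y hy
    simpa using hK.conj_mem y hy g⁻¹
  simpa using ucs_mem_of_equiv (MulAut.conj g) h1 h2 n hx

/-- Lemma 0: a pointwise `α`-fixed normal subgroup is central when `G = [G,α]`. -/
lemma fixed_normal_le_center (α : MulAut G)
    (hGα : Subgroup.closure {x : G | ∃ g : G, x = g⁻¹ * α g} = ⊤)
    {N : Subgroup G} (hN : N.Normal) (hfix : ∀ x ∈ N, α x = x) :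
    ∀ x ∈ N, ∀ g : G, g * x = x * g := by
  have key : ∀ s ∈ {x : G | ∃ g : G, x = g⁻¹ * α g}, s ∈ Subgroup.centralizer (N : Set G) := by
    rintro s ⟨g, rfl⟩
    rw [Subgroup.mem_centralizer_iff]
    intro n hn
    have h1 : α g * n * (α g)⁻¹ = g * n * g⁻¹ := by
      calc α g * n * (α g)⁻¹ = α (g * n * g⁻¹) := by
            rw [map_mul, map_mul, map_inv, hfix n hn]
        _ = g * n * g⁻¹ := hfix _ (hN.conj_mem n hn g)
    calc n * (g⁻¹ * α g) = g⁻¹ * (g * n * g⁻¹) * α g := by group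
      _ = g⁻¹ * (α g * n * (α g)⁻¹) * α g := by rw [h1]
      _ = (g⁻¹ * α g) * n := by group
  have htop : (⊤ : Subgroup G) ≤ Subgroup.centralizer (N : Set G) := by
    rw [← hGα]
    exact (closure_le _).mpr key
  intro x hx g
  exact (Subgroup.mem_centralizer_iff.mp (htop (mem_top g)) x hx).symm

end Part2

section Part3
open Subgroup

/-- a noncentral normal subgroup of a finite p-group contains a noncentral element of Z₂ -/
lemma exists_mem_z2_not_center {P : Type*} [Group P] [Finite P] {p : ℕ} (hp : p.Prime)
    (hP : IsPGroup p P) (M : Subgroup P) [hMn : M.Normal] (hnc : ¬ M ≤ Subgroup.center P) :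
    ∃ x ∈ M, x ∈ Subgroup.upperCentralSeries P 2 ∧ x ∉ Subgroup.center P := by
  haveI : Fact p.Prime := ⟨hp⟩
  set Z := Subgroup.center P with hZ
  let π := QuotientGroup.mk' Z
  have hsurj : Function.Surjective π := QuotientGroup.mk'_surjective Z
  set Mb := Subgroup.map π M with hMb
  haveI : Mb.Normal := hMn.map π hsurj
  have hMbp : IsPGroup p Mb := (hP.to_subgroup M).map _
  have hMbne : Nontrivial Mb := by
    obtain ⟨x, hxM, hxZ⟩ := SetLike.not_le_iff_exists.mp hnc
    refine ⟨⟨π x, mem_map_of_mem π hxM⟩, 1, ?_⟩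
    intro hcon
    apply hxZ
    have h2 : π x = 1 := by simpa using congrArg Subtype.val hcon
    exact (QuotientGroup.eq_one_iff x).mp h2
  obtain ⟨k, hk0, hcard⟩ := (IsPGroup.nontrivial_iff_card hMbp).mp hMbne
  have hdvd : p ∣ Nat.card Mb := hcard ▸ dvd_pow_self p hk0.ne'
  have hQp : IsPGroup p (ConjAct (P ⧸ Z)) := (hP.to_quotient Z).of_equiv ConjAct.toConjAct
  have h1fix : (1 : Mb) ∈ MulAction.fixedPoints (ConjAct (P ⧸ Z)) Mb := by
    intro g; simp
  obtain ⟨b, hbfix, hb1⟩ :=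
    hQp.exists_fixed_point_of_prime_dvd_card_of_fixed_point (α := Mb) hdvd h1fix
  obtain ⟨x, hxM, hxval⟩ := b.2
  have hxnc : x ∉ Z := by
    intro hxZ'
    have h3 : π x = 1 := (QuotientGroup.eq_one_iff x).mpr hxZ'
    exact hb1 (Subtype.ext (h3.symm.trans hxval))
  refine ⟨x, hxM, ?_, hxnc⟩
  have h2 : (2 : ℕ) = 1 + 1 := rfl
  rw [h2, Subgroup.mem_upperCentralSeries_succ_iff]
  intro y
  rw [Subgroup.upperCentralSeries_one]
  rw [← hZ, commutatorElement_def, ← QuotientGroup.eq_one_iff (x * y * x⁻¹ * y⁻¹)]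
  have hb := hbfix (ConjAct.toConjAct (π y))
  have hval : ConjAct.toConjAct (π y) • (b : P ⧸ Z) = (b : P ⧸ Z) := by
    conv_lhs => rw [← ConjAct.Subgroup.val_conj_smul]
    rw [hb]
  have hval2 : π y * (b : P ⧸ Z) * (π y)⁻¹ = (b : P ⧸ Z) := by
    rwa [ConjAct.toConjAct_smul] at hval
  have hcomm : π y * π x * (π y)⁻¹ = π x := by rw [hxval]; exact hval2
  have hxy : π x * π y = π y * π x := by
    have h5 := congrArg (fun t => t * π y) hcomm
    simp only [inv_mul_cancel_right] at h5
    exact h5.symm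
  have hfinal : π (x * y * x⁻¹ * y⁻¹) = 1 := by
    simp only [map_mul, map_inv]
    rw [hxy]
    group
  exact hfinal

end Part3

/-- The `p`-core `O_p(G)`: the largest normal `p`-subgroup of `G`, here defined as the
join of all normal `p`-subgroups of `G`. -/
def pCore (p : ℕ) (G : Type*) [Group G] : Subgroup G :=
  ⨆ N ∈ {N : Subgroup G | N.Normal ∧ IsPGroup p N}, N

section Part4
open Subgroup
variable {p : ℕ} {G : Type*} [Group G]

lemma pCore_eq_sSup : pCore p G = sSup {N : Subgroup G | N.Normal ∧ IsPGroup p N} := by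
  rw [pCore, sSup_eq_iSup]

lemma le_pCore {N : Subgroup G} (h1 : N.Normal) (h2 : IsPGroup p N) : N ≤ pCore p G := by
  rw [pCore_eq_sSup]
  exact le_sSup ⟨h1, h2⟩

lemma pCore_normal_isPGroup [Finite G] : (pCore p G).Normal ∧ IsPGroup p (pCore p G) := by
  classical
  haveI : Finite (Subgroup G) :=
    Finite.of_injective (fun H : Subgroup G => (H : Set G)) SetLike.coe_injective
  have hfin : {N : Subgroup G | N.Normal ∧ IsPGroup p N}.Finite := Set.toFinite _
  rw [pCore_eq_sSup, ← Set.Finite.coe_toFinset hfin, ← Finset.sup_id_eq_sSup]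
  refine Finset.sup_induction (p := fun N : Subgroup G => N.Normal ∧ IsPGroup p N)
    ⟨inferInstance, IsPGroup.of_bot⟩ ?_ ?_
  · rintro a ⟨ha1, ha2⟩ b ⟨hb1, hb2⟩
    haveI := ha1; haveI := hb1
    exact ⟨inferInstance, IsPGroup.to_sup_of_normal_right ha2 hb2⟩
  · intro N hN
    exact hfin.mem_toFinset.mp hN

lemma map_pCore_eq [Finite G] (f : G ≃* G) :
    Subgroup.map f.toMonoidHom (pCore p G) = pCore p G := by
  obtain ⟨hn, hp⟩ := pCore_normal_isPGroup (p := p) (G := G)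
  have h : ∀ e : G ≃* G, Subgroup.map e.toMonoidHom (pCore p G) ≤ pCore p G := fun e =>
    le_pCore (hn.map e.toMonoidHom (MulEquiv.surjective e)) (hp.map e.toMonoidHom)
  refine le_antisymm (h f) ?_
  have h2 := Subgroup.map_mono (f := f.toMonoidHom) (h f.symm)
  rwa [Subgroup.map_map,
    show f.toMonoidHom.comp f.symm.toMonoidHom = MonoidHom.id G from
      MonoidHom.ext fun x => f.apply_symm_apply x,
    Subgroup.map_id] at h2

lemma pCore_quotient [Finite G] (Z : Subgroup G) [hZn : Z.Normal] (hZp : IsPGroup p Z) :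
    pCore p (G ⧸ Z) = Subgroup.map (QuotientGroup.mk' Z) (pCore p G) := by
  obtain ⟨hn, hp⟩ := pCore_normal_isPGroup (p := p) (G := G)
  have hsurj : Function.Surjective (QuotientGroup.mk' Z) := QuotientGroup.mk'_surjective Z
  refine le_antisymm ?_ (le_pCore (hn.map _ hsurj) (hp.map _))
  rw [pCore_eq_sSup]
  refine sSup_le ?_
  rintro N ⟨hN1, hN2⟩
  have heq : N = Subgroup.map (QuotientGroup.mk' Z) (Subgroup.comap (QuotientGroup.mk' Z) N) :=
    (Subgroup.map_comap_eq_self_of_surjective hsurj N).symm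
  rw [heq]
  apply Subgroup.map_mono
  apply le_pCore
  · exact Subgroup.Normal.comap hN1 _
  · exact IsPGroup.comap_of_ker_isPGroup hN2 _ (by rwa [QuotientGroup.ker_mk'])

lemma dvd_pow_of_dvd_pow_of_le (hp : p.Prime) {a k j : ℕ} (h1 : a ∣ p ^ k) (h2 : a ≤ p ^ j) :
    a ∣ p ^ j := by
  obtain ⟨i, _, rfl⟩ := (Nat.dvd_prime_pow hp).mp h1
  exact pow_dvd_pow p ((Nat.pow_le_pow_iff_right hp.one_lt).mp h2)

lemma dvd_pow_pred_of_mul_dvd (hp : p.Prime) {r s n : ℕ} (h : r * s ∣ p ^ (n + 1)) (hr : r ≠ 1) :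
    s ∣ p ^ n := by
  obtain ⟨c, _, hc⟩ := (Nat.dvd_prime_pow hp).mp ((dvd_mul_right r s).trans h)
  obtain ⟨b, _, hb⟩ := (Nat.dvd_prime_pow hp).mp ((dvd_mul_left s r).trans h)
  subst hc hb
  rw [← pow_add] at h
  have hcb : c + b ≤ n + 1 := (Nat.pow_dvd_pow_iff_le_right hp.one_lt).mp h
  have hc : 1 ≤ c := by
    rcases Nat.eq_zero_or_pos c with h0 | h1
    · exact absurd (by rw [h0, pow_zero]) hr
    · exact h1
  exact pow_dvd_pow p (by omega)

lemma relindex_map_le_relindex {G H : Type*} [Group G] [Finite G] [Group H] (f : G →* H)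
    (D M : Subgroup G) :
    (D.map f).relIndex (M.map f) ≤ D.relIndex M := by
  let φ : (↥M ⧸ D.subgroupOf M) → (↥(M.map f) ⧸ (D.map f).subgroupOf (M.map f)) :=
    Quotient.map' (fun x => ⟨f x, Subgroup.mem_map_of_mem f x.2⟩)
      (by
        intro x y hxy
        rw [QuotientGroup.leftRel_apply] at hxy ⊢
        rw [Subgroup.mem_subgroupOf] at hxy ⊢
        exact ⟨(x : G)⁻¹ * y, hxy, by simp [map_mul, map_inv]⟩)
  have hφ : Function.Surjective φ := by
    intro q
    induction q using Quotient.inductionOn' with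
    | h y =>
      obtain ⟨x, hxM, hfx⟩ := y.2
      refine ⟨Quotient.mk'' ⟨x, hxM⟩, ?_⟩
      have hyy : (⟨f x, Subgroup.mem_map_of_mem f hxM⟩ : ↥(M.map f)) = y := Subtype.ext hfx
      show Quotient.map' _ _ (Quotient.mk'' _) = _
      rw [Quotient.map'_mk'']
      rw [hyy]
  exact Nat.card_le_card_of_surjective φ hφ

end Part4

section Part5
open Subgroup

universe u

lemma relindex_fix_le_card {G : Type*} [Group G] [Finite G] (α : MulAut G) (M : Subgroup G) :
    (fixSub α).relIndex M ≤ Nat.card {x : G | ∃ g ∈ M, x = g⁻¹ * α g} := by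
  set F := (fixSub α).subgroupOf M with hF
  have h1 : (fixSub α).relIndex M = Nat.card (Quotient (QuotientGroup.rightRel F)) :=
    (Nat.card_congr (QuotientGroup.quotientRightRelEquivQuotientLeftRel F)).symm
  rw [h1]
  have hcompat : ∀ (x y : ↥M), (QuotientGroup.rightRel F) x y →
      ((x : G)⁻¹ * α x : G) = (y : G)⁻¹ * α y := by
    intro x y hxy
    rw [QuotientGroup.rightRel_apply, Subgroup.mem_subgroupOf] at hxy
    have h' : α (y : G) * (α (x : G))⁻¹ = (y : G) * (x : G)⁻¹ := by
      have h0 : α ((y : G) * (x : G)⁻¹) = (y : G) * (x : G)⁻¹ := hxy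
      rw [map_mul, map_inv] at h0
      exact h0
    calc (x : G)⁻¹ * α (x : G) = (y : G)⁻¹ * ((y : G) * (x : G)⁻¹) * α (x : G) := by group
      _ = (y : G)⁻¹ * (α (y : G) * (α (x : G))⁻¹) * α (x : G) := by rw [h']
      _ = (y : G)⁻¹ * α (y : G) := by group
  let ψ : Quotient (QuotientGroup.rightRel F) → {x : G | ∃ g ∈ M, x = g⁻¹ * α g} :=
    fun q => Quotient.liftOn' q (fun x : ↥M => (⟨(x : G)⁻¹ * α x, ⟨x, x.2, rfl⟩⟩ :
      {x : G | ∃ g ∈ M, x = g⁻¹ * α g}))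
      (fun x y hxy => Subtype.ext (hcompat x y hxy))
  have hred : ∀ z : ↥M, ψ (Quotient.mk'' z) = ⟨(z : G)⁻¹ * α z, ⟨z, z.2, rfl⟩⟩ :=
    fun z => rfl
  have hinj : Function.Injective ψ := by
    intro q1 q2
    induction q1 using Quotient.inductionOn' with
    | h x =>
    induction q2 using Quotient.inductionOn' with
    | h y =>
    intro hxy
    rw [hred x, hred y] at hxy
    have heq : (x : G)⁻¹ * α x = (y : G)⁻¹ * α y := congrArg Subtype.val hxy
    apply Quotient.sound'
    show (QuotientGroup.rightRel F) x y
    rw [QuotientGroup.rightRel_apply, Subgroup.mem_subgroupOf]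
    show α ((y * x⁻¹ : ↥M) : G) = ((y * x⁻¹ : ↥M) : G)
    push_cast
    calc α ((y : G) * (x : G)⁻¹) = α (y : G) * (α (x : G))⁻¹ := by rw [map_mul, map_inv]
      _ = (y : G) * (((y : G)⁻¹ * α (y : G)) * ((x : G)⁻¹ * α (x : G))⁻¹) * (x : G)⁻¹ := by group
      _ = (y : G) * (x : G)⁻¹ := by rw [← heq]; group
  exact Nat.card_le_card_of_injective ψ hinj

theorem pcore_aux (p : ℕ) (hp : p.Prime) :
    ∀ (m : ℕ) (G : Type u) [Group G] [Finite G] (α : MulAut G),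
      Subgroup.closure {x : G | ∃ g : G, x = g⁻¹ * α g} = ⊤ →
      ∀ (M : Subgroup G), M.Normal → IsPGroup p M →
        Subgroup.map α.toMonoidHom M = M →
        (fixSub α).relIndex M ∣ p ^ m →
        M ≤ Subgroup.map (pCore p G).subtype (Subgroup.upperCentralSeries (pCore p G) (2 * m + 1)) := by
  intro m
  induction m using Nat.strong_induction_on with
  | _ m IH =>
  intro G _ _ α hGα M hMn hMp hMinv hrel
  haveI : Fact p.Prime := ⟨hp⟩
  obtain ⟨hKn, hKp⟩ := pCore_normal_isPGroup (p := p) (G := G)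
  haveI := hKn
  haveI := hMn
  set K := pCore p G with hK
  have hMK : M ≤ K := le_pCore hMn hMp
  have hKα : Subgroup.map α.toMonoidHom K = K := map_pCore_eq α
  obtain ⟨hKα1, hKα2⟩ := mem_of_map_eq hKα
  set Z2 : Subgroup G := Subgroup.map K.subtype (Subgroup.upperCentralSeries K 2) with hZ2
  have hZ2K : Z2 ≤ K := Subgroup.map_subtype_le _
  have hZ2p : IsPGroup p Z2 := hKp.to_le hZ2K
  haveI hZ2n : Z2.Normal := ucs_map_normal K 2
  have hZ2α : Subgroup.map α.toMonoidHom Z2 = Z2 :=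
    map_eq_self_of_mem α Z2
      (fun x hx => ucs_mem_of_equiv α hKα1 hKα2 2 hx)
      (fun x hx => ucs_mem_of_equiv α.symm hKα2 (fun y hy => by simpa using hKα1 y hy) 2 hx)
  by_cases hcase : M ⊓ Z2 ≤ fixSub α
  · -- Case B : α fixes M ∩ Z2 pointwise, conclude M ≤ Z(K)
    have hW2n : (M ⊓ Z2).Normal := inferInstance
    have hcent := fixed_normal_le_center α hGα hW2n (fun x hx => hcase hx)
    have hMbK : (M.subgroupOf K) ≤ Subgroup.center K := by
      by_contra hnc
      haveI : (M.subgroupOf K).Normal := hMn.subgroupOf K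
      obtain ⟨x', hx'M, hx'2, hx'c⟩ := exists_mem_z2_not_center hp hKp (M.subgroupOf K) hnc
      apply hx'c
      rw [Subgroup.mem_center_iff]
      intro k
      have hxM' : (x' : G) ∈ M := hx'M
      have hxZ2 : (x' : G) ∈ Z2 := ⟨x', hx'2, rfl⟩
      exact Subtype.ext (hcent (x' : G) ⟨hxM', hxZ2⟩ (k : G))
    have hMle1 : M ≤ Subgroup.map K.subtype (Subgroup.upperCentralSeries K 1) := by
      rw [Subgroup.upperCentralSeries_one]
      calc M = (M.subgroupOf K).map K.subtype := by
            rw [subgroupOf_map_subtype]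
            exact (inf_eq_left.mpr hMK).symm
        _ ≤ _ := Subgroup.map_mono hMbK
    exact hMle1.trans (Subgroup.map_mono (Subgroup.upperCentralSeries_mono _ (by omega)))
  · -- Case A : descent to the quotient by Z2
    obtain ⟨x₀, hx₀, hx₀f⟩ := SetLike.not_le_iff_exists.mp hcase
    rcases m with _ | m'
    · exfalso
      have h1 : (fixSub α).relIndex M = 1 := Nat.dvd_one.mp (by simpa using hrel)
      exact hx₀f (Subgroup.relIndex_eq_one.mp h1 hx₀.1)
    set Q := G ⧸ Z2 with hQ
    set π := QuotientGroup.mk' Z2 with hπ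
    have hπs : Function.Surjective π := QuotientGroup.mk'_surjective Z2
    set αb : MulAut Q := QuotientGroup.congr Z2 Z2 α hZ2α with hαb
    have hπα : ∀ g : G, αb (π g) = π (α g) := fun g => QuotientGroup.congr_mk Z2 Z2 α hZ2α g
    have hGαb : Subgroup.closure {x : Q | ∃ g : Q, x = g⁻¹ * αb g} = ⊤ := by
      rw [eq_top_iff]
      calc (⊤ : Subgroup Q) = Subgroup.map π ⊤ := (Subgroup.map_top_of_surjective π hπs).symm
        _ = Subgroup.map π (Subgroup.closure _) := by rw [hGα]
        _ = Subgroup.closure (π '' _) := MonoidHom.map_closure π _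
        _ ≤ Subgroup.closure {x : Q | ∃ g : Q, x = g⁻¹ * αb g} := by
            apply Subgroup.closure_mono
            rintro _ ⟨s, ⟨g, rfl⟩, rfl⟩
            exact ⟨π g, by rw [map_mul, map_inv, hπα]⟩
    set Mb := Subgroup.map π M with hMb
    haveI hMbn : Mb.Normal := hMn.map π hπs
    have hMbp : IsPGroup p Mb := hMp.map π
    have hMbinv : Subgroup.map αb.toMonoidHom Mb = Mb := by
      have hcomp : αb.toMonoidHom.comp (π : G →* Q) = (π : G →* Q).comp α.toMonoidHom :=
        MonoidHom.ext fun g => hπα g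
      rw [hMb, Subgroup.map_map, hcomp, ← Subgroup.map_map, hMinv]
    set F := fixSub α with hF
    set D := (F ⊓ M) ⊔ (M ⊓ Z2) with hD
    have hFMD : F ⊓ M ≤ D := le_sup_left
    have hDM : D ≤ M := sup_le inf_le_right inf_le_left
    have e1 : (F ⊓ M).relIndex D * D.relIndex M = (F ⊓ M).relIndex M :=
      Subgroup.relIndex_mul_relIndex _ _ _ hFMD hDM
    have e2 : (F ⊓ M).relIndex M = F.relIndex M := Subgroup.inf_relIndex_right F M
    have hrs : (F ⊓ M).relIndex D * D.relIndex M ∣ p ^ (m' + 1) := by rw [e1, e2]; exact hrel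
    have hrne : (F ⊓ M).relIndex D ≠ 1 := by
      intro hone
      have hDF : D ≤ F ⊓ M := Subgroup.relIndex_eq_one.mp hone
      exact hx₀f ((hDF ((le_sup_right : M ⊓ Z2 ≤ D) hx₀)).1)
    have hsdvd : D.relIndex M ∣ p ^ m' := dvd_pow_pred_of_mul_dvd hp hrs hrne
    have hDfix : Subgroup.map π D ≤ fixSub αb := by
      rw [hD, Subgroup.map_sup]
      apply sup_le
      · rintro _ ⟨x, hx, rfl⟩
        rw [mem_fixSub, hπα, show α x = x from hx.1]
      · rintro _ ⟨x, hx, rfl⟩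
        rw [mem_fixSub, hπα]
        have hαx : α x ∈ Z2 := by rw [← hZ2α]; exact mem_map_of_mem _ hx.2
        have h9 : (x : G)⁻¹ * α x ∈ Z2 := Z2.mul_mem (Z2.inv_mem hx.2) hαx
        exact ((QuotientGroup.eq (s := Z2)).mpr h9).symm
    have hrel' : (fixSub αb).relIndex Mb ∣ p ^ m' := by
      have t1 : (fixSub αb).relIndex Mb ∣ (Subgroup.map π D).relIndex Mb :=
        Subgroup.relIndex_dvd_of_le_left Mb hDfix
      have t2 : (Subgroup.map π D).relIndex Mb ≤ D.relIndex M := by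
        rw [hMb]; exact relindex_map_le_relindex π D M
      have t3 : 0 < (Subgroup.map π D).relIndex Mb := Nat.card_pos
      have t4 : (fixSub αb).relIndex Mb ≤ p ^ m' :=
        le_trans (Nat.le_of_dvd t3 t1)
          (le_trans t2 (Nat.le_of_dvd (pow_pos hp.pos m') hsdvd))
      obtain ⟨k, hk⟩ := IsPGroup.iff_card.mp hMbp
      have t5 : (fixSub αb).relIndex Mb ∣ Nat.card Mb :=
        Subgroup.index_dvd_card ((fixSub αb).subgroupOf Mb)
      exact dvd_pow_of_dvd_pow_of_le hp (hk ▸ t5) t4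
    have hIH := IH m' (Nat.lt_succ_self m') Q αb hGαb Mb hMbn hMbp hMbinv hrel'
    have hKQ : pCore p Q = Subgroup.map π K := pCore_quotient Z2 hZ2p
    intro x hx
    rw [mem_map_subtype_ucs_iff]
    refine ⟨hMK hx, ?_⟩
    intro l hlen hlK
    set l₁ := l.take (2 * m' + 1) with hl₁
    set l₂ := l.drop (2 * m' + 1) with hl₂
    have hlsplit : l = l₁ ++ l₂ := (List.take_append_drop _ l).symm
    have hlen₁ : l₁.length = 2 * m' + 1 := by
      rw [hl₁, List.length_take, hlen]; omega
    have hlen₂ : l₂.length = 2 := by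
      rw [hl₂, List.length_drop, hlen]; omega
    have hl₁K : ∀ y ∈ l₁, y ∈ K := fun y hy => hlK y (List.take_subset _ l hy)
    have hl₂K : ∀ y ∈ l₂, y ∈ K := fun y hy => hlK y (List.drop_subset _ l hy)
    set c := commList x l₁ with hc
    have hcK : c ∈ K := commList_mem K (hMK hx) hl₁K
    have hcZ2 : c ∈ Z2 := by
      have hxb := hIH (mem_map_of_mem π hx)
      rw [mem_map_subtype_ucs_iff] at hxb
      have hres := hxb.2 (l₁.map π) (by rw [List.length_map, hlen₁])
        (by
          intro y hy
          obtain ⟨z, hz, rfl⟩ := List.mem_map.mp hy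
          rw [hKQ]
          exact mem_map_of_mem π (hl₁K z hz))
      have hπc : π c = 1 := by
        rw [hc, map_commList π x l₁]
        exact hres
      exact (QuotientGroup.eq_one_iff c).mp hπc
    rw [hlsplit, commList_append, ← hc]
    have hcZ2' := (mem_map_subtype_ucs_iff K 2 c).mp hcZ2
    exact hcZ2'.2 l₂ hlen₂ hl₂K

end Part5

/-- Lemma 4.1: Let `p` be a prime and `G` a finite group with a coprime automorphism `α`
such that `G = [G,α]`. If `M` is an `α`-invariant normal `p`-subgroup of `G` with
`|I_M(α)| = p^m`, then `M ≤ Z_{2m+1}(O_p(G))`. -/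
theorem subgroup_in_upper_central_series_of_pcore
    (p : ℕ) (hp : p.Prime) (G : Type*) [Group G] [Finite G] (α : MulAut G)
    (hcop : Nat.Coprime (orderOf α) (Nat.card G))
    (hGα : Subgroup.closure {x : G | ∃ g : G, x = g⁻¹ * α g} = ⊤)
    (M : Subgroup G) (hMn : M.Normal) (hMp : IsPGroup p M)
    (hMinv : Subgroup.map α.toMonoidHom M = M)
    (m : ℕ) (hIM : Nat.card {x : G | ∃ g ∈ M, x = g⁻¹ * α g} = p ^ m) :
    M ≤ Subgroup.map (pCore p G).subtype (_root_.upperCentralSeries (pCore p G) (2 * m + 1)) := by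
  haveI : Fact p.Prime := ⟨hp⟩
  have h1 : (fixSub α).relIndex M ≤ p ^ m := hIM ▸ relindex_fix_le_card α M
  have h2 : (fixSub α).relIndex M ∣ Nat.card M :=
    Subgroup.index_dvd_card ((fixSub α).subgroupOf M)
  obtain ⟨k, hk⟩ := IsPGroup.iff_card.mp hMp
  exact pcore_aux p hp m G α hGα M hMn hMp hMinv
    (dvd_pow_of_dvd_pow_of_le hp (hk ▸ h2) h1)
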